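/- Let f denote the Davenport–Heilbronn function. Then f satisfies the functional equation f(s) = 2^s π^{s−1} 5^{1/2−s} Γ(1−s) cos(πs/2) · f(1−s) for every s ∈ ℂ that is not an integer. -/

import Mathlib

open Complex DirichletCharacter

/-- The complex-conjugate character of a Dirichlet character `χ` (with values in `ℂ`). -/
noncomputable def conjChar {q : ℕ} (χ : DirichletCharacter ℂ q) : DirichletCharacter ℂ q :=
  χ.ringHomComp (starRingEnd ℂ)

section Aux

open Finset ZMod

private lemma sq_cancel' {x y : ℝ} (hx : 0 ≤ x) (hy : 0 ≤ y) (h : x^2 = y^2) : x = y := by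
  have h0 : (x - y) * (x + y) = 0 := by ring_nf; linarith
  rcases mul_eq_zero.mp h0 with h1 | h1 <;> linarith

private lemma dh_real_keys {θ : ℝ} (hθ : θ ∈ Set.Ioo 0 (Real.pi / 2))
    (htan : Real.tan θ ^ 2 =
      (Real.sqrt 2 - Real.sqrt (1 + 1 / Real.sqrt 5)) /
        (Real.sqrt 2 + Real.sqrt (1 + 1 / Real.sqrt 5))) :
    Real.sqrt 5 * Real.cos (2*θ) = 2 * Real.sin (2*Real.pi/5) ∧
      Real.sqrt 5 * Real.sin (2*θ) = 2 * Real.sin (Real.pi/5) := by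
  obtain ⟨hθ1, hθ2⟩ := hθ
  have hπ := Real.pi_pos
  set a := Real.sqrt (1 + 1 / Real.sqrt 5) with ha
  have h5 : (Real.sqrt 5)^2 = 5 := Real.sq_sqrt (by norm_num)
  have h5pos : (0:ℝ) < Real.sqrt 5 := by positivity
  have h2 : (Real.sqrt 2)^2 = 2 := Real.sq_sqrt (by norm_num)
  have h2pos : (0:ℝ) < Real.sqrt 2 := by positivity
  have ha2 : a^2 = 1 + 1 / Real.sqrt 5 := Real.sq_sqrt (by positivity)
  have hapos : (0:ℝ) < a := Real.sqrt_pos.mpr (by positivity)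
  have hinv5 : Real.sqrt 5 * (1 / Real.sqrt 5) = 1 := by field_simp
  have halt : a < Real.sqrt 2 := by
    have h1 : (1:ℝ) / Real.sqrt 5 < 1 := by
      rw [div_lt_one h5pos]; nlinarith
    nlinarith
  have hcosθ : 0 < Real.cos θ :=
    Real.cos_pos_of_mem_Ioo ⟨by linarith, hθ2⟩
  have htan' : Real.sin θ ^ 2 * (Real.sqrt 2 + a) = (Real.sqrt 2 - a) * Real.cos θ ^ 2 := by
    rw [Real.tan_eq_sin_div_cos, div_pow, div_eq_div_iff (by positivity) (by positivity)] at htan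
    linarith
  have hpyth := Real.sin_sq_add_cos_sq θ
  have hcos2θ : Real.cos (2*θ) = a / Real.sqrt 2 := by
    rw [Real.cos_two_mul, eq_div_iff (ne_of_gt h2pos)]
    linear_combination (Real.sqrt 2 + a) * hpyth - htan'
  have hcos2θpos : 0 ≤ Real.cos (2*θ) := by rw [hcos2θ]; positivity
  have hsin2θpos : 0 ≤ Real.sin (2*θ) :=
    (Real.sin_pos_of_pos_of_lt_pi (by linarith) (by linarith)).le
  have hc2 : Real.cos (2*θ)^2 = (1 + 1 / Real.sqrt 5)/2 := by
    rw [hcos2θ, div_pow, ha2, h2]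
  have hs2 : Real.sin (2*θ)^2 = (1 - 1 / Real.sqrt 5)/2 := by
    have := Real.sin_sq_add_cos_sq (2*θ); linarith
  have hcos15 : Real.cos (Real.pi/5) = (1 + Real.sqrt 5)/4 := Real.cos_pi_div_five
  have hc15sq : Real.cos (Real.pi/5)^2 = (6 + 2*Real.sqrt 5)/16 := by
    rw [hcos15]; linear_combination h5/16
  have hsin15sq : Real.sin (Real.pi/5)^2 = (10 - 2*Real.sqrt 5)/16 := by
    have := Real.sin_sq_add_cos_sq (Real.pi/5); linarith
  have hcos25 : Real.cos (2*Real.pi/5) = (Real.sqrt 5 - 1)/4 := by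
    rw [show 2*Real.pi/5 = 2*(Real.pi/5) by ring, Real.cos_two_mul, hcos15]
    linear_combination h5/8
  have hc25sq : Real.cos (2*Real.pi/5)^2 = (6 - 2*Real.sqrt 5)/16 := by
    rw [hcos25]; linear_combination h5/16
  have hsin25sq : Real.sin (2*Real.pi/5)^2 = (10 + 2*Real.sqrt 5)/16 := by
    have := Real.sin_sq_add_cos_sq (2*Real.pi/5); linarith
  have hsin15pos : 0 ≤ Real.sin (Real.pi/5) :=
    (Real.sin_pos_of_pos_of_lt_pi (by positivity) (by linarith)).le
  have hsin25pos : 0 ≤ Real.sin (2*Real.pi/5) :=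
    (Real.sin_pos_of_pos_of_lt_pi (by positivity) (by linarith)).le
  constructor
  · refine sq_cancel' (by positivity) (by positivity) ?_
    rw [mul_pow, mul_pow, h5, hc2, hsin25sq]
    linear_combination (-(1/Real.sqrt 5)/2) * h5 + (Real.sqrt 5/2) * hinv5
  · refine sq_cancel' (by positivity) (by positivity) ?_
    rw [mul_pow, mul_pow, h5, hs2, hsin15sq]
    linear_combination ((1/Real.sqrt 5)/2) * h5 - (Real.sqrt 5/2) * hinv5

private lemma gauss5 (χ : DirichletCharacter ℂ 5) :
    gaussSum χ ZMod.stdAddChar = χ 0 * ZMod.stdAddChar (0 : ZMod 5)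
      + χ 1 * ZMod.stdAddChar (1 : ZMod 5) + χ 2 * ZMod.stdAddChar (2 : ZMod 5)
      + χ 3 * ZMod.stdAddChar (3 : ZMod 5) + χ 4 * ZMod.stdAddChar (4 : ZMod 5) := by
  rw [gaussSum, show (Finset.univ : Finset (ZMod 5)) = {0, 1, 2, 3, 4} by decide,
    Finset.sum_insert (by decide), Finset.sum_insert (by decide),
    Finset.sum_insert (by decide), Finset.sum_insert (by decide), Finset.sum_singleton]
  ring

private lemma std5 (k : ℕ) (z : ZMod 5) (hz : z = (k : ZMod 5)) (x : ℝ)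
    (hx : 2 * Real.pi * k / 5 = x) :
    ZMod.stdAddChar z = (Real.cos x : ℂ) + (Real.sin x : ℂ) * I := by
  rw [hz, show ((k : ZMod 5)) = (((k : ℤ)) : ZMod 5) by push_cast; ring, ZMod.stdAddChar_coe,
    show (2 * (Real.pi : ℂ) * I * ((k : ℤ) : ℂ) / ((5 : ℕ) : ℂ)) = ((x : ℝ) : ℂ) * I by
      rw [← hx]; push_cast; ring,
    Complex.exp_mul_I, ← Complex.ofReal_cos, ← Complex.ofReal_sin]

private lemma dh_gauss (χ₅ : DirichletCharacter ℂ 5) (hχ : χ₅ (2 : ZMod 5) = I) {θ : ℝ}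
    (key1 : Real.sqrt 5 * Real.cos (2*θ) = 2 * Real.sin (2*Real.pi/5))
    (key2 : Real.sqrt 5 * Real.sin (2*θ) = 2 * Real.sin (Real.pi/5)) :
    gaussSum χ₅ ZMod.stdAddChar = I * (Real.sqrt 5 : ℂ) * Complex.exp (2*θ*I) ∧
    gaussSum (conjChar χ₅) ZMod.stdAddChar = I * (Real.sqrt 5 : ℂ) * Complex.exp (-(2*θ*I)) := by
  have h4 : χ₅ 4 = -1 := by rw [show (4 : ZMod 5) = 2 * 2 by decide, map_mul, hχ, I_mul_I]
  have h3 : χ₅ 3 = -I := by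
    rw [show (3 : ZMod 5) = 2 * 4 by decide, map_mul, hχ, h4]; ring
  have h0 : χ₅ 0 = 0 := χ₅.map_nonunit (by decide)
  have h1 : χ₅ 1 = 1 := map_one χ₅
  have e1 := std5 1 1 (by decide) (2*Real.pi/5) (by push_cast; ring)
  have e2 := std5 2 2 (by decide) (4*Real.pi/5) (by push_cast; ring)
  have e3 := std5 3 3 (by decide) (6*Real.pi/5) (by push_cast; ring)
  have e4 := std5 4 4 (by decide) (8*Real.pi/5) (by push_cast; ring)
  have r2s : Real.sin (4*Real.pi/5) = Real.sin (Real.pi/5) := by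
    rw [show 4*Real.pi/5 = Real.pi - Real.pi/5 by ring, Real.sin_pi_sub]
  have r2c : Real.cos (4*Real.pi/5) = -Real.cos (Real.pi/5) := by
    rw [show 4*Real.pi/5 = Real.pi - Real.pi/5 by ring, Real.cos_pi_sub]
  have r3s : Real.sin (6*Real.pi/5) = -Real.sin (Real.pi/5) := by
    rw [show 6*Real.pi/5 = Real.pi/5 + Real.pi by ring, Real.sin_add_pi]
  have r3c : Real.cos (6*Real.pi/5) = -Real.cos (Real.pi/5) := by
    rw [show 6*Real.pi/5 = Real.pi/5 + Real.pi by ring, Real.cos_add_pi]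
  have r4s : Real.sin (8*Real.pi/5) = -Real.sin (2*Real.pi/5) := by
    rw [show 8*Real.pi/5 = 2*Real.pi - 2*Real.pi/5 by ring, Real.sin_two_pi_sub]
  have r4c : Real.cos (8*Real.pi/5) = Real.cos (2*Real.pi/5) := by
    rw [show 8*Real.pi/5 = 2*Real.pi - 2*Real.pi/5 by ring, Real.cos_two_pi_sub]
  have key1' : (Real.sqrt 5 : ℂ) * (Real.cos (2*θ) : ℂ) = 2 * (Real.sin (2*Real.pi/5) : ℂ) := by
    exact_mod_cast congrArg (Complex.ofReal) key1
  have key2' : (Real.sqrt 5 : ℂ) * (Real.sin (2*θ) : ℂ) = 2 * (Real.sin (Real.pi/5) : ℂ) := by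
    exact_mod_cast congrArg (Complex.ofReal) key2
  have hexp : Complex.exp (2*(θ:ℂ)*I) = (Real.cos (2*θ) : ℂ) + (Real.sin (2*θ) : ℂ) * I := by
    rw [show 2*(θ:ℂ)*I = ((2*θ : ℝ) : ℂ) * I by push_cast; ring, Complex.exp_mul_I,
      ← Complex.ofReal_cos, ← Complex.ofReal_sin]
  have hexp' : Complex.exp (-(2*(θ:ℂ)*I)) =
      (Real.cos (2*θ) : ℂ) - (Real.sin (2*θ) : ℂ) * I := by
    rw [show -(2*(θ:ℂ)*I) = ((-(2*θ) : ℝ) : ℂ) * I by push_cast; ring, Complex.exp_mul_I,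
      ← Complex.ofReal_cos, ← Complex.ofReal_sin, Real.cos_neg, Real.sin_neg]
    push_cast; ring
  have hc0 : conjChar χ₅ 0 = 0 := by
    rw [conjChar, MulChar.ringHomComp_apply, h0, map_zero]
  have hc1 : conjChar χ₅ 1 = 1 := map_one _
  have hc2 : conjChar χ₅ 2 = -I := by
    rw [conjChar, MulChar.ringHomComp_apply, hχ, Complex.conj_I]
  have hc3 : conjChar χ₅ 3 = I := by
    rw [conjChar, MulChar.ringHomComp_apply, h3, map_neg, Complex.conj_I, neg_neg]
  have hc4 : conjChar χ₅ 4 = -1 := by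
    rw [conjChar, MulChar.ringHomComp_apply, h4]; simp
  constructor
  · rw [gauss5, h0, h1, hχ, h3, h4, e1, e2, e3, e4, r2s, r2c, r3s, r3c, r4s, r4c, hexp]
    push_cast at key1' key2' ⊢
    linear_combination key2' - I * key1' +
      (2*Complex.sin ((Real.pi:ℂ)/5) - (Real.sqrt 5 : ℂ) * Complex.sin (2*(θ:ℂ))) * Complex.I_sq
  · rw [gauss5, hc0, hc1, hc2, hc3, hc4, e1, e2, e3, e4, r2s, r2c, r3s, r3c, r4s, r4c, hexp']
    push_cast at key1' key2' ⊢
    linear_combination (-key2') - I * key1' +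
      ((Real.sqrt 5 : ℂ) * Complex.sin (2*(θ:ℂ)) - 2*Complex.sin ((Real.pi:ℂ)/5)) * Complex.I_sq

private lemma LF_mul (c : ℂ) (Φ : ZMod 5 → ℂ) (s : ℂ) :
    ZMod.LFunction (fun j => c * Φ j) s = c * ZMod.LFunction Φ s := by
  simp only [ZMod.LFunction, Finset.mul_sum, ← mul_assoc]
  exact Finset.sum_congr rfl fun j _ => by ring

private lemma dh_fe (χ : DirichletCharacter ℂ 5) (hprim : IsPrimitive χ) (hodd : χ (-1) = -1)
    (s : ℂ) (hs1 : ∀ n : ℕ, (1 - s) ≠ -(n:ℂ)) (hs0 : χ 0 = 0) :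
    DirichletCharacter.LFunction χ s = gaussSum χ ZMod.stdAddChar * (-2*I) * (5:ℂ)^(-s) *
      (2*(Real.pi:ℂ))^(s-1) * Complex.Gamma (1-s) * Complex.cos ((Real.pi:ℂ)*s/2) *
      ZMod.LFunction (⇑χ⁻¹) (1-s) := by
  set τ := gaussSum χ ZMod.stdAddChar with hτ
  have hF1 : 𝓕 (⇑χ) = fun k => (-τ) * (⇑χ⁻¹) k := by
    funext k
    rw [hprim.fourierTransform_eq_inv_mul_gaussSum, show (-k) = (-1) * k by ring, map_mul]
    have h1 : χ⁻¹ (-1) = -1 := by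
      rw [MulChar.inv_apply_eq_inv', hodd]; norm_num
    rw [h1]; ring
  have hneg : (fun j => (⇑χ) (-j)) = -(⇑χ) := by
    funext j
    rw [Pi.neg_apply, show (-j) = (-1) * j by ring, map_mul, hodd]; ring
  have hF2 : 𝓕 (fun j => (⇑χ) (-j)) = fun k => τ * (⇑χ⁻¹) k := by
    rw [hneg, map_neg, hF1]
    funext k
    rw [Pi.neg_apply]; ring
  have h := ZMod.LFunction_one_sub (⇑χ) (s := 1 - s) hs1 (Or.inl hs0)
  rw [show (1 : ℂ) - (1 - s) = s by ring, hF1, hF2, LF_mul, LF_mul,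
    show (-(Real.pi:ℂ) * I * (1 - s) / 2) = -((Real.pi:ℂ) * I * (1 - s) / 2) by ring] at h
  have hL : DirichletCharacter.LFunction χ s = ZMod.LFunction (⇑χ) s := rfl
  rw [hL, h, show (((5:ℕ):ℂ)) = (5:ℂ) by norm_num,
    show (1:ℂ) - s - 1 = -s by ring, show -(1 - s) = s - 1 by ring]
  have hsin : Complex.exp (-((Real.pi:ℂ) * I * (1-s) / 2))
      - Complex.exp ((Real.pi:ℂ) * I * (1-s) / 2)
      = -2 * I * Complex.cos ((Real.pi:ℂ) * s / 2) := by
    rw [show ((Real.pi:ℂ) * I * (1-s) / 2) = ((Real.pi:ℂ) * (1-s) / 2) * I by ring]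
    rw [show -(((Real.pi:ℂ) * (1-s) / 2) * I) = (-((Real.pi:ℂ) * (1-s) / 2)) * I by ring]
    rw [Complex.exp_mul_I, Complex.exp_mul_I, Complex.cos_neg, Complex.sin_neg,
      show ((Real.pi:ℂ) * (1-s) / 2) = (Real.pi:ℂ)/2 - (Real.pi:ℂ)*s/2 by ring,
      Complex.sin_pi_div_two_sub]
    ring
  linear_combination ((5:ℂ)^(-s) * (2*(Real.pi:ℂ))^(s-1) * Complex.Gamma (1-s) * τ *
    ZMod.LFunction (⇑χ⁻¹) (1-s)) * hsin

private lemma zmod5_cases (x : ZMod 5) : x = 0 ∨ x = 1 ∨ x = 2 ∨ x = 3 ∨ x = 4 := by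
  revert x; decide

private lemma dh_primitive (χ : DirichletCharacter ℂ 5) (hne : χ ≠ 1) : IsPrimitive χ := by
  have h2 : χ.conductor ≠ 1 := fun h =>
    hne ((eq_one_iff_conductor_eq_one).mpr h)
  rcases (Nat.Prime.eq_one_or_self_of_dvd (by norm_num) _ (conductor_dvd_level χ)) with h | h
  · exact absurd h h2
  · exact h

end Aux

/-- The Davenport–Heilbronn function
`f(s) = ½ sec θ (e^{-iθ} L(s,χ₅) + e^{iθ} L(s,χ̄₅))`, where `χ₅` is the Dirichlet character
mod 5 with `χ₅(2) = i` and `tan²θ = (√2 - √(1+1/√5))/(√2 + √(1+1/√5))` with `θ ∈ (0, π/2)`,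
satisfies `f(s) = 2^s π^{s-1} 5^{1/2-s} Γ(1-s) cos(πs/2) f(1-s)` for all non-integer `s`. -/
theorem davenport_heilbronn_functional_equation
    (χ₅ : DirichletCharacter ℂ 5) (hχ : χ₅ (2 : ZMod 5) = I)
    (θ : ℝ) (hθ : θ ∈ Set.Ioo 0 (Real.pi / 2))
    (htan : Real.tan θ ^ 2 =
      (Real.sqrt 2 - Real.sqrt (1 + 1 / Real.sqrt 5)) /
        (Real.sqrt 2 + Real.sqrt (1 + 1 / Real.sqrt 5)))
    (f : ℂ → ℂ)
    (hf : ∀ s : ℂ, f s = (1 / 2) * ((Real.cos θ : ℂ))⁻¹ *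
      (Complex.exp (-(I * θ)) * LFunction χ₅ s +
        Complex.exp (I * θ) * LFunction (conjChar χ₅) s)) :
    ∀ s : ℂ, (∀ n : ℤ, s ≠ (n : ℂ)) →
      f s = (2 : ℂ) ^ s * (Real.pi : ℂ) ^ (s - 1) * (5 : ℂ) ^ ((1 : ℂ) / 2 - s) *
        Complex.Gamma (1 - s) * Complex.cos (Real.pi * s / 2) * f (1 - s) := by
  intro s hs
  -- basic character values
  have h4 : χ₅ 4 = -1 := by rw [show (4 : ZMod 5) = 2 * 2 by decide, map_mul, hχ, I_mul_I]
  have h3 : χ₅ 3 = -I := by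
    rw [show (3 : ZMod 5) = 2 * 4 by decide, map_mul, hχ, h4]; ring
  have h0 : χ₅ 0 = 0 := χ₅.map_nonunit (by decide)
  have hc0 : conjChar χ₅ 0 = 0 := by
    rw [conjChar, MulChar.ringHomComp_apply, h0, map_zero]
  have hc2 : conjChar χ₅ 2 = -I := by
    rw [conjChar, MulChar.ringHomComp_apply, hχ, Complex.conj_I]
  have hc3 : conjChar χ₅ 3 = I := by
    rw [conjChar, MulChar.ringHomComp_apply, h3, map_neg, Complex.conj_I, neg_neg]
  have hc4 : conjChar χ₅ 4 = -1 := by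
    rw [conjChar, MulChar.ringHomComp_apply, h4]; simp
  -- oddness
  have hneg1 : (-1 : ZMod 5) = 4 := by decide
  have hodd : χ₅ (-1) = -1 := by rw [hneg1, h4]
  have hoddc : conjChar χ₅ (-1) = -1 := by rw [hneg1, hc4]
  -- primitivity
  have hprim : IsPrimitive χ₅ := by
    refine dh_primitive _ fun h => ?_
    rw [h, MulChar.one_apply (by decide : IsUnit (2 : ZMod 5))] at hχ
    simpa using congrArg Complex.im hχ
  have hprimc : IsPrimitive (conjChar χ₅) := by
    refine dh_primitive _ fun h => ?_
    rw [h, MulChar.one_apply (by decide : IsUnit (2 : ZMod 5))] at hc2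
    simpa using congrArg Complex.im hc2
  -- inverse characters
  have hinv1 : ⇑χ₅⁻¹ = ⇑(conjChar χ₅) := by
    funext x
    rw [MulChar.inv_apply_eq_inv', conjChar, MulChar.ringHomComp_apply]
    rcases zmod5_cases x with rfl | rfl | rfl | rfl | rfl
    · rw [h0]; simp
    · rw [map_one]; simp
    · rw [hχ, Complex.inv_I, Complex.conj_I]
    · rw [h3, inv_neg, Complex.inv_I, neg_neg, map_neg, Complex.conj_I, neg_neg]
    · rw [h4]; norm_num
  have hinv2 : ⇑(conjChar χ₅)⁻¹ = ⇑χ₅ := by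
    funext x
    rw [MulChar.inv_apply_eq_inv']
    rcases zmod5_cases x with rfl | rfl | rfl | rfl | rfl
    · rw [hc0, h0]; simp
    · rw [map_one, map_one]; simp
    · rw [hc2, hχ, inv_neg, Complex.inv_I, neg_neg]
    · rw [hc3, h3, Complex.inv_I]
    · rw [hc4, h4]; norm_num
  -- Gauss sums
  obtain ⟨key1, key2⟩ := dh_real_keys hθ htan
  obtain ⟨hg1, hg2⟩ := dh_gauss χ₅ hχ key1 key2
  -- hypotheses for the functional equation
  have hs1 : ∀ n : ℕ, (1 - s) ≠ -(n:ℂ) := by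
    intro n hn
    exact hs ((n:ℤ)+1) (by push_cast; linear_combination -hn)
  -- functional equations for the two L-functions
  have fe1 := dh_fe χ₅ hprim hodd s hs1 h0
  have fe2 := dh_fe (conjChar χ₅) hprimc hoddc s hs1 hc0
  rw [hg1, hinv1] at fe1
  rw [hg2, hinv2] at fe2
  have hZ1 : ZMod.LFunction (⇑(conjChar χ₅)) (1-s) =
      DirichletCharacter.LFunction (conjChar χ₅) (1-s) := rfl
  have hZ2 : ZMod.LFunction (⇑χ₅) (1-s) = DirichletCharacter.LFunction χ₅ (1-s) := rfl
  rw [hZ1] at fe1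
  rw [hZ2] at fe2
  -- the power identity
  have hpow : 2 * ((Real.sqrt 5 : ℝ) : ℂ) * (5:ℂ)^(-s) * (2*(Real.pi:ℂ))^(s-1)
      = (2:ℂ)^s * (Real.pi:ℂ)^(s-1) * (5:ℂ)^((1:ℂ)/2 - s) := by
    have h2π : (2*(Real.pi:ℂ))^(s-1) = (2:ℂ)^(s-1) * (Real.pi:ℂ)^(s-1) := by
      rw [show (2:ℂ)*(Real.pi:ℂ) = (((2:ℝ)):ℂ)*((Real.pi:ℝ):ℂ) by norm_num,
        Complex.mul_cpow_ofReal_nonneg (by norm_num) Real.pi_pos.le]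
      norm_num
    have h2s : (2:ℂ)^(s-1) = (2:ℂ)^s / 2 := by
      rw [Complex.cpow_sub _ _ (by norm_num : (2:ℂ) ≠ 0), Complex.cpow_one]
    have h5h : ((Real.sqrt 5 : ℝ) : ℂ) = (5:ℂ)^((1:ℂ)/2) := by
      rw [Real.sqrt_eq_rpow, Complex.ofReal_cpow (by norm_num : (0:ℝ) ≤ 5)]
      norm_num
    have h5s : (5:ℂ)^((1:ℂ)/2 - s) = (5:ℂ)^((1:ℂ)/2) * (5:ℂ)^(-s) := by
      rw [show (1:ℂ)/2 - s = (1:ℂ)/2 + (-s) by ring,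
        Complex.cpow_add _ _ (by norm_num : (5:ℂ) ≠ 0)]
    rw [h2π, h2s, h5h, h5s]; ring
  -- exponential identities
  have hE1 : Complex.exp (-(I*(θ:ℂ))) * Complex.exp (2*(θ:ℂ)*I) = Complex.exp (I*(θ:ℂ)) := by
    rw [← Complex.exp_add]; congr 1; ring
  have hE2 : Complex.exp (I*(θ:ℂ)) * Complex.exp (-(2*(θ:ℂ)*I)) =
      Complex.exp (-(I*(θ:ℂ))) := by
    rw [← Complex.exp_add]; congr 1; ring
  -- final assembly
  rw [hf s, hf (1-s)]
  set B := (2 : ℂ) ^ s * (Real.pi : ℂ) ^ (s - 1) * (5 : ℂ) ^ ((1 : ℂ) / 2 - s) *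
    Complex.Gamma (1 - s) * Complex.cos ((Real.pi:ℂ) * s / 2) with hB
  have hLχ : DirichletCharacter.LFunction χ₅ s =
      Complex.exp (2*(θ:ℂ)*I) * B * DirichletCharacter.LFunction (conjChar χ₅) (1-s) := by
    rw [hB]
    linear_combination fe1 +
      (Complex.exp (2*(θ:ℂ)*I) * Complex.Gamma (1-s) * Complex.cos ((Real.pi:ℂ)*s/2) *
        DirichletCharacter.LFunction (conjChar χ₅) (1-s)) * hpow +
      (-2*((Real.sqrt 5:ℝ):ℂ)*(5:ℂ)^(-s)*(2*(Real.pi:ℂ))^(s-1)*Complex.exp (2*(θ:ℂ)*I) *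
        Complex.Gamma (1-s) * Complex.cos ((Real.pi:ℂ)*s/2) *
        DirichletCharacter.LFunction (conjChar χ₅) (1-s)) * Complex.I_sq
  have hLc : DirichletCharacter.LFunction (conjChar χ₅) s =
      Complex.exp (-(2*(θ:ℂ)*I)) * B * DirichletCharacter.LFunction χ₅ (1-s) := by
    rw [hB]
    linear_combination fe2 +
      (Complex.exp (-(2*(θ:ℂ)*I)) * Complex.Gamma (1-s) * Complex.cos ((Real.pi:ℂ)*s/2) *
        DirichletCharacter.LFunction χ₅ (1-s)) * hpow +
      (-2*((Real.sqrt 5:ℝ):ℂ)*(5:ℂ)^(-s)*(2*(Real.pi:ℂ))^(s-1)*Complex.exp (-(2*(θ:ℂ)*I)) *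
        Complex.Gamma (1-s) * Complex.cos ((Real.pi:ℂ)*s/2) *
        DirichletCharacter.LFunction χ₅ (1-s)) * Complex.I_sq
  rw [hLχ, hLc]
  linear_combination ((1/2) * ((Real.cos θ : ℂ))⁻¹ * B *
      DirichletCharacter.LFunction (conjChar χ₅) (1-s)) * hE1 +
    ((1/2) * ((Real.cos θ : ℂ))⁻¹ * B * DirichletCharacter.LFunction χ₅ (1-s)) * hE2
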